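/- There is no graphic matroid N (on any type) for which there exists an online matroid embedding of the class of all graphic matroids into N. In fact this already fails for the class of graphic matroids with at most 6 elements. -/

import Mathlib

open Set

/-- The rank of a set in a matroid: the supremum of the cardinalities of its
independent subsets. -/
noncomputable def mRank {α : Type*} (M : Matroid α) (S : Set α) : ℕ∞ :=
  ⨆ I ∈ {I : Set α | M.Indep I ∧ I ⊆ S}, I.encard

/-- The rank of a set of vectors: the dimension of its linear span. -/
noncomputable def spanRank (K : Type*) [Field K] {W : Type*} [AddCommGroup W] [Module K W]
    (S : Set W) : ℕ :=
  Module.finrank K (Submodule.span K S)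

/-- The `k`-prefix of an ordered matroid on `Fin m`: its restriction to the
first `k` elements, viewed as a matroid on `Fin k`. -/
def prefixMatroid {k m : ℕ} (h : k ≤ m) (M : Matroid (Fin m)) : Matroid (Fin k) :=
  M.comap (Fin.castLE h)

/-- An online matroid morphism (OMM) of the class `P` of ordered matroids into the host
matroid `N`: a rank-preserving map for each matroid of the class, consistent on prefixes. -/
def OMMof (P : (m : ℕ) → Matroid (Fin m) → Prop) {β : Type*} (N : Matroid β) : Prop :=
  ∃ f : (m : ℕ) → Matroid (Fin m) → (Fin m → β),
    (∀ m (M : Matroid (Fin m)), P m M →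
      ∀ S : Set (Fin m), S ⊆ M.E → mRank N (f m M '' S) = mRank M S) ∧
    (∀ k m (hkm : k ≤ m) (M : Matroid (Fin m)), P m M →
      ∀ i : Fin k, f k (prefixMatroid hkm M) i = f m M (Fin.castLE hkm i))

/-- An online matroid embedding (OME): an online matroid morphism all of whose maps are
injective. -/
def OMEof (P : (m : ℕ) → Matroid (Fin m) → Prop) {β : Type*} (N : Matroid β) : Prop :=
  ∃ f : (m : ℕ) → Matroid (Fin m) → (Fin m → β),
    (∀ m (M : Matroid (Fin m)), P m M → Function.Injective (f m M)) ∧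
    (∀ m (M : Matroid (Fin m)), P m M →
      ∀ S : Set (Fin m), S ⊆ M.E → mRank N (f m M '' S) = mRank M S) ∧
    (∀ k m (hkm : k ≤ m) (M : Matroid (Fin m)), P m M →
      ∀ i : Fin k, f k (prefixMatroid hkm M) i = f m M (Fin.castLE hkm i))

/-- A matroid is graphic if it admits a rank-preserving `𝔽₂` vertex-edge incidence
representation: each element is sent to the zero vector or to the sum of two distinct
standard basis vectors (a vector supported on exactly two vertices). -/
def IsGraphic {α : Type*} (M : Matroid α) : Prop :=
  ∃ (V : Type) (_ : Fintype V) (g : α → V → ZMod 2),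
    (∀ S : Set α, S ⊆ M.E → (spanRank (ZMod 2) (g '' S) : ℕ∞) = mRank M S) ∧
    ∀ e ∈ M.E, g e = 0 ∨ ∃ u v : V, u ≠ v ∧ {w | g e w ≠ 0} = {u, v}

/-! ### Auxiliary material -/

open Submodule Module

lemma zmod2_cases : ∀ a : ZMod 2, a = 0 ∨ a = 1 := by decide
lemma zmod2_add_self (a : ZMod 2) : a + a = 0 := by revert a; decide
lemma zmod2_add_ne_zero_iff (a b : ZMod 2) : a + b ≠ 0 ↔ a ≠ b := by revert a b; decide
lemma zmod2_eq_one {a : ZMod 2} (h : a ≠ 0) : a = 1 := by revert a h; decide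

section SpanLemmas
variable {W : Type*} [AddCommGroup W] [Module (ZMod 2) W]

lemma finrank_span_singleton_le' (x : W) :
    finrank (ZMod 2) (span (ZMod 2) ({x} : Set W)) ≤ 1 := by
  rcases eq_or_ne x 0 with rfl | hx
  · rw [span_zero_singleton]
    simp [finrank_bot]
  · rw [finrank_span_singleton hx]

lemma span_pair_facts {x y : W}
    (h : finrank (ZMod 2) (span (ZMod 2) ({x, y} : Set W)) = 2) :
    x ≠ 0 ∧ y ≠ 0 ∧ x ≠ y := by
  refine ⟨?_, ?_, ?_⟩
  · rintro rfl
    have hle : span (ZMod 2) ({(0 : W), y} : Set W) ≤ span (ZMod 2) ({y} : Set W) := by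
      rw [span_le]
      rintro w (rfl | rfl)
      · exact zero_mem _
      · exact subset_span rfl
    have := (Submodule.finrank_mono hle).trans (finrank_span_singleton_le' y)
    omega
  · rintro rfl
    have hle : span (ZMod 2) ({x, (0 : W)} : Set W) ≤ span (ZMod 2) ({x} : Set W) := by
      rw [span_le]
      rintro w (rfl | rfl)
      · exact subset_span rfl
      · exact zero_mem _
    have := (Submodule.finrank_mono hle).trans (finrank_span_singleton_le' x)
    omega
  · rintro rfl
    rw [Set.pair_eq_singleton] at h
    have := finrank_span_singleton_le' x
    omega

lemma pair_rank_two {x y : W} (hx : x ≠ 0) (hy : y ≠ 0) (hxy : x ≠ y) :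
    finrank (ZMod 2) (span (ZMod 2) ({x, y} : Set W)) = 2 := by
  classical
  have li : LinearIndependent (ZMod 2) ((↑) : ({x,y} : Set W) → W) :=
    linearIndepOn_id_pair hx (by
      intro a
      rcases zmod2_cases a with rfl | rfl
      · simpa using hy.symm
      · simpa using hxy)
  rw [finrank_span_set_eq_card li, ← Set.ncard_eq_toFinset_card', Set.ncard_pair hxy]

lemma triple_rank_two {x y z : W} (hx : x ≠ 0) (hy : y ≠ 0) (hxy : x ≠ y)
    (hz : z = x + y) :
    finrank (ZMod 2) (span (ZMod 2) ({x, y, z} : Set W)) = 2 := by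
  have hmem : z ∈ span (ZMod 2) ({x, y} : Set W) := by
    rw [hz]
    exact mem_span_pair.2 ⟨1, 1, by simp⟩
  have hset : ({x, y, z} : Set W) = insert z {x, y} := by
    ext w
    simp only [Set.mem_insert_iff, Set.mem_singleton_iff]
    tauto
  rw [hset, span_insert_eq_span hmem]
  exact pair_rank_two hx hy hxy

lemma triangle_eq [FiniteDimensional (ZMod 2) W] {p q r : W}
    (hpq : finrank (ZMod 2) (span (ZMod 2) ({p, q} : Set W)) = 2)
    (hpr : finrank (ZMod 2) (span (ZMod 2) ({p, r} : Set W)) = 2)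
    (hqr : finrank (ZMod 2) (span (ZMod 2) ({q, r} : Set W)) = 2)
    (hall : finrank (ZMod 2) (span (ZMod 2) ({p, q, r} : Set W)) = 2) :
    r = p + q := by
  have hle : span (ZMod 2) ({p, q} : Set W) ≤ span (ZMod 2) ({p, q, r} : Set W) :=
    span_mono (by intro w hw; simp only [Set.mem_insert_iff, Set.mem_singleton_iff] at *; tauto)
  have heq : span (ZMod 2) ({p, q} : Set W) = span (ZMod 2) ({p, q, r} : Set W) :=
    Submodule.eq_of_le_of_finrank_eq hle (by rw [hpq, hall])
  have hr : r ∈ span (ZMod 2) ({p, q} : Set W) := by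
    rw [heq]
    exact subset_span (by simp)
  obtain ⟨a, b, hab⟩ := mem_span_pair.1 hr
  obtain ⟨-, hrne0, hprne⟩ := span_pair_facts hpr
  obtain ⟨-, -, hqrne⟩ := span_pair_facts hqr
  rcases zmod2_cases a with rfl | rfl <;> rcases zmod2_cases b with rfl | rfl <;>
    simp only [zero_smul, one_smul, zero_add, add_zero] at hab
  · exact absurd hab.symm hrne0
  · exact absurd hab hqrne
  · exact absurd hab hprne
  · exact hab.symm

end SpanLemmas

section VecMatroid
variable {W : Type*} [AddCommGroup W] [Module (ZMod 2) W] [FiniteDimensional (ZMod 2) W]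
variable {m : ℕ}

def VIndep (v : Fin m → W) (I : Set (Fin m)) : Prop :=
  Set.InjOn v I ∧ LinearIndependent (ZMod 2) ((↑) : (v '' I) → W)

omit [FiniteDimensional (ZMod 2) W] in
lemma VIndep.ncard_eq {v : Fin m → W} {I : Set (Fin m)} (h : VIndep v I) :
    I.ncard = finrank (ZMod 2) (span (ZMod 2) (v '' I)) := by
  classical
  rw [← Set.ncard_image_of_injOn h.1, Set.ncard_eq_toFinset_card',
    finrank_span_set_eq_card h.2]

omit [FiniteDimensional (ZMod 2) W] in
lemma VIndep.encard_eq {v : Fin m → W} {I : Set (Fin m)} (h : VIndep v I) :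
    I.encard = (finrank (ZMod 2) (span (ZMod 2) (v '' I)) : ℕ∞) := by
  rw [← h.ncard_eq, (Set.toFinite I).cast_ncard_eq]

omit [FiniteDimensional (ZMod 2) W] in
lemma VIndep.insert {v : Fin m → W} {I : Set (Fin m)} {e : Fin m} (h : VIndep v I)
    (he : v e ∉ span (ZMod 2) (v '' I)) : VIndep v (insert e I) := by
  have heim : v e ∉ v '' I := fun hmem => he (subset_span hmem)
  constructor
  · rintro x (rfl | hx) y (rfl | hy) hxy
    · rfl
    · exact absurd (hxy ▸ Set.mem_image_of_mem v hy) heim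
    · exact absurd (hxy ▸ Set.mem_image_of_mem v hx) heim
    · exact h.1 hx hy hxy
  · rw [Set.image_insert_eq]
    exact (linearIndepOn_id_insert heim).2 ⟨h.2, he⟩

def vecMatroid (v : Fin m → W) : Matroid (Fin m) :=
  (IndepMatroid.ofFinite Set.finite_univ (VIndep v)
    (⟨Set.injOn_empty v, by rw [Set.image_empty]; exact linearIndependent_empty _ _⟩)
    (fun I J hJ hIJ => ⟨hJ.1.mono hIJ, LinearIndepOn.mono (R := ZMod 2) (v := id) hJ.2 (Set.image_mono hIJ)⟩)
    (by
      intro I J hI hJ hIJ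
      by_contra hcon
      push_neg at hcon
      have himJ : v '' J ⊆ (span (ZMod 2) (v '' I) : Set W) := by
        rintro w ⟨e, heJ, rfl⟩
        by_cases heI : e ∈ I
        · exact subset_span (Set.mem_image_of_mem v heI)
        · by_contra hns
          exact hcon e heJ heI (hI.insert hns)
      have hle : span (ZMod 2) (v '' J) ≤ span (ZMod 2) (v '' I) := span_le.2 himJ
      have := Submodule.finrank_mono hle
      rw [← hI.ncard_eq, ← hJ.ncard_eq] at this
      omega)
    (fun I _ => Set.subset_univ I)).matroid

@[simp] lemma vecMatroid_E (v : Fin m → W) : (vecMatroid v).E = univ := rfl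

@[simp] lemma vecMatroid_indep (v : Fin m → W) (I : Set (Fin m)) :
    (vecMatroid v).Indep I ↔ VIndep v I := by
  exact Iff.rfl

lemma mRank_vecMatroid (v : Fin m → W) (S : Set (Fin m)) :
    mRank (vecMatroid v) S = (finrank (ZMod 2) (span (ZMod 2) (v '' S)) : ℕ∞) := by
  classical
  apply le_antisymm
  · refine iSup₂_le fun I hI => ?_
    obtain ⟨hind, hIS⟩ := hI
    rw [vecMatroid_indep] at hind
    rw [hind.encard_eq]
    exact_mod_cast Nat.cast_le.2 (Submodule.finrank_mono (span_mono (Set.image_mono hIS)))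
  · obtain ⟨b, hbS, hspan, hli⟩ := exists_linearIndependent (ZMod 2) (v '' S)
    have hb' : ∀ x : b, ∃ i, i ∈ S ∧ v i = (x : W) := fun x => (Set.mem_image v S x).1 (hbS x.2)
    choose σ hσS hσv using hb'
    set I := Set.range σ with hIdef
    have hIS : I ⊆ S := by rintro _ ⟨x, rfl⟩; exact hσS x
    have himI : v '' I = b := by
      rw [hIdef, ← Set.range_comp]
      have : v ∘ σ = fun x : b => (x : W) := funext fun x => hσv x
      rw [this, Subtype.range_coe]
    have hinj : Set.InjOn v I := by
      rintro _ ⟨x, rfl⟩ _ ⟨y, rfl⟩ hxy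
      rw [hσv x, hσv y] at hxy
      rw [Subtype.ext hxy]
    have hvind : VIndep v I := ⟨hinj, by rw [himI]; exact hli⟩
    have hencI : I.encard = (finrank (ZMod 2) (span (ZMod 2) (v '' S)) : ℕ∞) := by
      rw [hvind.encard_eq, himI, hspan]
    refine le_iSup₂_of_le I ?_ hencI.ge
    exact ⟨(vecMatroid_indep v I).2 hvind, hIS⟩

lemma vecMatroid_comap {k : ℕ} (hkm : k ≤ m) (v : Fin m → W) :
    prefixMatroid hkm (vecMatroid v) = vecMatroid (v ∘ Fin.castLE hkm) := by
  refine Matroid.ext_indep ?_ (fun I _ => ?_)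
  · show Fin.castLE hkm ⁻¹' univ = univ
    rfl
  · rw [prefixMatroid, Matroid.comap_indep_iff, vecMatroid_indep, vecMatroid_indep]
    have him : (v ∘ Fin.castLE hkm) '' I = v '' (Fin.castLE hkm '' I) :=
      (Set.image_image v (Fin.castLE hkm) I).symm
    constructor
    · rintro ⟨⟨hinj, hli⟩, -⟩
      refine ⟨fun x hx y hy hxy => ?_, by rw [him]; exact hli⟩
      exact Fin.castLE_injective hkm
        (hinj (Set.mem_image_of_mem _ hx) (Set.mem_image_of_mem _ hy) hxy)
    · rintro ⟨hinj, hli⟩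
      refine ⟨⟨?_, by rw [← him]; exact hli⟩, (Fin.castLE_injective hkm).injOn⟩
      rintro _ ⟨x, hx, rfl⟩ _ ⟨y, hy, rfl⟩ hxy
      rw [hinj hx hy hxy]

lemma vecMatroid_comp_linear (T : W →ₗ[ZMod 2] W) (hT : Function.Injective T)
    (v : Fin m → W) : vecMatroid (fun i => T (v i)) = vecMatroid v := by
  refine Matroid.ext_indep rfl (fun I _ => ?_)
  rw [vecMatroid_indep, vecMatroid_indep]
  have him : (fun i => T (v i)) '' I = T '' (v '' I) := (Set.image_image T v I).symm
  constructor
  · rintro ⟨hinj, hli⟩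
    rw [him] at hli
    refine ⟨fun x hx y hy hxy => hinj hx hy (congrArg T hxy), ?_⟩
    have h1 : LinearIndependent (ZMod 2) (fun x : (v '' I) => T x) :=
      (linearIndepOn_iff_image hT.injOn).mpr hli
    exact LinearIndependent.of_comp T h1
  · rintro ⟨hinj, hli⟩
    refine ⟨fun x hx y hy hxy => hinj hx hy (hT hxy), ?_⟩
    rw [him]
    have h1 : LinearIndependent (ZMod 2) (fun x : (v '' I) => T x) :=
      hli.map' T (LinearMap.ker_eq_bot.2 hT)
    exact (linearIndepOn_iff_image hT.injOn).mp h1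

end VecMatroid

/-! ### Edge-vector combinatorics -/

def EdgeVec {V : Type*} (y : V → ZMod 2) : Prop :=
  ∃ u u', u ≠ u' ∧ {w | y w ≠ 0} = {u, u'}

section Edges
variable {V : Type*}

lemma supp_iff_of_eq {y : V → ZMod 2} {u u' : V} (h : {w | y w ≠ 0} = {u, u'}) :
    ∀ w, y w ≠ 0 ↔ (w = u ∨ w = u') := fun w => by
  have : w ∈ {w | y w ≠ 0} ↔ w ∈ ({u, u'} : Set V) := by rw [h]
  simpa using this

lemma edgeVec_ne_zero {z : V → ZMod 2} (h : EdgeVec z) : z ≠ 0 := by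
  obtain ⟨u, u', -, hs⟩ := h
  intro h0
  have : u ∈ {w | z w ≠ 0} := by rw [hs]; exact Or.inl rfl
  rw [h0] at this
  exact this rfl

lemma xor_of_edges {x y : V → ZMod 2} {s t p q : V} (hst : s ≠ t) (_hpq : p ≠ q)
    (hx : ∀ w, x w ≠ 0 ↔ (w = s ∨ w = t)) (hy : ∀ w, y w ≠ 0 ↔ (w = p ∨ w = q))
    (hxy : EdgeVec (x + y)) :
    ((s = p ∨ s = q) ∧ ¬(t = p ∨ t = q)) ∨ ((t = p ∨ t = q) ∧ ¬(s = p ∨ s = q)) := by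
  by_cases hs : s = p ∨ s = q <;> by_cases ht : t = p ∨ t = q
  · exfalso
    have hxyeq : x = y := by
      funext w
      have hiff : (w = s ∨ w = t) ↔ (w = p ∨ w = q) := by
        constructor
        · rintro (rfl | rfl)
          · exact hs
          · exact ht
        · rcases hs with rfl | rfl <;> rcases ht with rfl | rfl
          · exact absurd rfl hst
          · rintro (rfl | rfl)
            · exact Or.inl rfl
            · exact Or.inr rfl
          · rintro (rfl | rfl)
            · exact Or.inr rfl
            · exact Or.inl rfl
          · exact absurd rfl hst
      by_cases hw : w = p ∨ w = q
      · rw [zmod2_eq_one ((hx w).2 (hiff.2 hw)), zmod2_eq_one ((hy w).2 hw)]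
      · rw [not_not.1 (fun hc => hw (hiff.1 ((hx w).1 hc))),
          not_not.1 (fun hc => hw ((hy w).1 hc))]
    have := edgeVec_ne_zero hxy
    apply this
    funext w
    show x w + y w = 0
    rw [hxyeq]
    exact zmod2_add_self _
  · exact Or.inl ⟨hs, ht⟩
  · exact Or.inr ⟨ht, hs⟩
  · exfalso
    have hvs : (x + y) s ≠ 0 := by
      show x s + y s ≠ 0
      rw [not_not.1 (fun hc => hs ((hy s).1 hc)), add_zero]
      exact (hx s).2 (Or.inl rfl)
    have hvt : (x + y) t ≠ 0 := by
      show x t + y t ≠ 0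
      rw [not_not.1 (fun hc => ht ((hy t).1 hc)), add_zero]
      exact (hx t).2 (Or.inr rfl)
    have hvp : (x + y) p ≠ 0 := by
      show x p + y p ≠ 0
      have hxp : x p = 0 := by
        by_contra hc
        rcases (hx p).1 hc with rfl | rfl
        · exact hs (Or.inl rfl)
        · exact ht (Or.inl rfl)
      rw [hxp, zero_add]
      exact (hy p).2 (Or.inl rfl)
    obtain ⟨u, u', huu, hsupp⟩ := hxy
    have hmem := supp_iff_of_eq hsupp
    rcases (hmem s).1 hvs with rfl | rfl <;> rcases (hmem t).1 hvt with rfl | rfl <;>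
      rcases (hmem p).1 hvp with h1 | h1 <;> simp_all

lemma normalize_edges {v0 v1 : V → ZMod 2} {A B P Q : V} (hAB : A ≠ B) (hPQ : P ≠ Q)
    (h0 : ∀ w, v0 w ≠ 0 ↔ (w = A ∨ w = B)) (h1 : ∀ w, v1 w ≠ 0 ↔ (w = P ∨ w = Q))
    (h01 : EdgeVec (v0 + v1)) :
    ∃ a b c : V, a ≠ b ∧ a ≠ c ∧ b ≠ c ∧
      (∀ w, v0 w ≠ 0 ↔ (w = a ∨ w = b)) ∧ (∀ w, v1 w ≠ 0 ↔ (w = b ∨ w = c)) := by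
  rcases xor_of_edges hAB hPQ h0 h1 h01 with ⟨hA, hB⟩ | ⟨hB, hA⟩
  · rcases hA with rfl | rfl
    · exact ⟨B, A, Q, fun h => hAB h.symm, fun h => hB (Or.inr h),
        fun h => hPQ h, fun w => (h0 w).trans or_comm, h1⟩
    · exact ⟨B, A, P, fun h => hAB h.symm, fun h => hB (Or.inl h),
        fun h => hPQ h.symm, fun w => (h0 w).trans or_comm,
        fun w => (h1 w).trans or_comm⟩
  · rcases hB with rfl | rfl
    · exact ⟨A, B, Q, hAB, fun h => hA (Or.inr h), fun h => hPQ h, h0, h1⟩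
    · exact ⟨A, B, P, hAB, fun h => hA (Or.inl h), fun h => hPQ h.symm, h0,
        fun w => (h1 w).trans or_comm⟩

lemma supp_add {v0 v1 : V → ZMod 2} {a b c : V} (hab : a ≠ b) (hac : a ≠ c) (hbc : b ≠ c)
    (h0 : ∀ w, v0 w ≠ 0 ↔ (w = a ∨ w = b)) (h1 : ∀ w, v1 w ≠ 0 ↔ (w = b ∨ w = c)) :
    ∀ w, (v0 + v1) w ≠ 0 ↔ (w = a ∨ w = c) := by
  intro w
  show v0 w + v1 w ≠ 0 ↔ _
  rw [zmod2_add_ne_zero_iff]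
  constructor
  · intro hne
    by_cases hc0 : v0 w ≠ 0
    · rcases (h0 w).1 hc0 with rfl | rfl
      · exact Or.inl rfl
      · exfalso
        have h1w : v1 w ≠ 0 := (h1 w).2 (Or.inl rfl)
        exact hne ((zmod2_eq_one hc0).trans (zmod2_eq_one h1w).symm)
    · have h0w : v0 w = 0 := not_not.1 hc0
      have h1w : v1 w ≠ 0 := fun hc => hne (h0w.trans hc.symm)
      rcases (h1 w).1 h1w with rfl | rfl
      · exact absurd ((h0 w).2 (Or.inr rfl)) hc0
      · exact Or.inr rfl
  · rintro (rfl | rfl)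
    · have h0w : v0 w ≠ 0 := (h0 w).2 (Or.inl rfl)
      have h1w : v1 w = 0 := by
        by_contra hc
        rcases (h1 w).1 hc with rfl | rfl
        · exact hab rfl
        · exact hac rfl
      rw [h1w]
      exact fun hc => h0w hc
    · have h1w : v1 w ≠ 0 := (h1 w).2 (Or.inr rfl)
      have h0w : v0 w = 0 := by
        by_contra hc
        rcases (h0 w).1 hc with rfl | rfl
        · exact hac rfl
        · exact hbc rfl
      rw [h0w]
      exact fun hc => h1w hc.symm

lemma fin_comb_half {a b c s t : V} (hab : a ≠ b) (hac : a ≠ c) (hbc : b ≠ c)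
    (hs : s = a ∨ s = b) (ht1 : ¬(t = a ∨ t = b))
    (X2 : ((s = b ∨ s = c) ∧ ¬(t = b ∨ t = c)) ∨ ((t = b ∨ t = c) ∧ ¬(s = b ∨ s = c)))
    (X3 : ((s = a ∨ s = c) ∧ ¬(t = a ∨ t = c)) ∨ ((t = a ∨ t = c) ∧ ¬(s = a ∨ s = c))) :
    False := by
  rcases hs with rfl | rfl
  · rcases X3 with ⟨-, ht3⟩ | ⟨-, hs3⟩
    · rcases X2 with ⟨hs2, -⟩ | ⟨ht2, -⟩
      · rcases hs2 with h | h
        · exact hab h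
        · exact hac h
      · rcases ht2 with rfl | rfl
        · exact ht1 (Or.inr rfl)
        · exact ht3 (Or.inr rfl)
    · exact hs3 (Or.inl rfl)
  · rcases X2 with ⟨-, ht2⟩ | ⟨-, hs2⟩
    · rcases X3 with ⟨hs3, -⟩ | ⟨ht3, -⟩
      · rcases hs3 with h | h
        · exact hab h.symm
        · exact hbc h
      · rcases ht3 with rfl | rfl
        · exact ht1 (Or.inl rfl)
        · exact ht2 (Or.inr rfl)
    · exact hs2 (Or.inl rfl)

lemma no_k4_edges {v0 v1 x : V → ZMod 2} (h0 : EdgeVec v0) (h1 : EdgeVec v1)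
    (h01 : EdgeVec (v0 + v1)) (hx : EdgeVec x) (hx0 : EdgeVec (x + v0))
    (hx1 : EdgeVec (x + v1)) (hx01 : EdgeVec (x + (v0 + v1))) : False := by
  obtain ⟨A, B, hAB, hs0⟩ := h0
  obtain ⟨P, Q, hPQ, hs1⟩ := h1
  obtain ⟨s, t, hst, hsx⟩ := hx
  obtain ⟨a, b, c, hab, hac, hbc, hiff0, hiff1⟩ :=
    normalize_edges hAB hPQ (supp_iff_of_eq hs0) (supp_iff_of_eq hs1) h01
  have hiff01 := supp_add hab hac hbc hiff0 hiff1
  have X1 := xor_of_edges hst hab (supp_iff_of_eq hsx) hiff0 hx0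
  have X2 := xor_of_edges hst hbc (supp_iff_of_eq hsx) hiff1 hx1
  have X3 := xor_of_edges hst hac (supp_iff_of_eq hsx) hiff01 hx01
  rcases X1 with ⟨hs, ht⟩ | ⟨ht, hs⟩
  · exact fin_comb_half hab hac hbc hs ht X2 X3
  · exact fin_comb_half hab hac hbc ht hs X2.symm X3.symm

end Edges

/-! ### Host-side transfer -/

lemma mem_ground_of_mRank_one {β : Type*} (N : Matroid β) (y : β)
    (h : mRank N {y} = 1) : y ∈ N.E := by
  have hind : N.Indep {y} := by
    by_contra hni
    have hle : mRank N {y} ≤ 0 := by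
      refine iSup₂_le fun I hI => ?_
      obtain ⟨hIind, hIs⟩ := hI
      rcases Set.subset_singleton_iff_eq.1 hIs with rfl | rfl
      · simp
      · exact absurd hIind hni
    rw [h] at hle
    exact absurd hle (by norm_num)
  exact Set.singleton_subset_iff.1 hind.subset_ground

lemma derive_facts {β : Type*} {V : Type} [Fintype V] (N : Matroid β) (g : β → V → ZMod 2)
    (hgrank : ∀ S : Set β, S ⊆ N.E → (spanRank (ZMod 2) (g '' S) : ℕ∞) = mRank N S)
    (hgedge : ∀ e ∈ N.E, g e = 0 ∨ ∃ u u', u ≠ u' ∧ {w | g e w ≠ 0} = {u, u'})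
    {m : ℕ} (v : Fin m → (Fin 4 → ZMod 2)) (hv : ∀ i, v i ≠ 0)
    (F : Fin m → β) (hF : ∀ S : Set (Fin m), mRank N (F '' S) = mRank (vecMatroid v) S) :
    (∀ S : Set (Fin m),
       finrank (ZMod 2) (span (ZMod 2) ((fun i => g (F i)) '' S))
         = finrank (ZMod 2) (span (ZMod 2) (v '' S))) ∧
    (∀ i, EdgeVec (g (F i))) := by
  have hFE : ∀ i, F i ∈ N.E := by
    intro i
    apply mem_ground_of_mRank_one
    have h1 := hF {i}
    rw [Set.image_singleton] at h1
    rw [h1, mRank_vecMatroid, Set.image_singleton, finrank_span_singleton (hv i)]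
    rfl
  have hsub : ∀ S : Set (Fin m), F '' S ⊆ N.E := by
    rintro S _ ⟨i, -, rfl⟩; exact hFE i
  have hrk : ∀ S : Set (Fin m),
      finrank (ZMod 2) (span (ZMod 2) ((fun i => g (F i)) '' S))
        = finrank (ZMod 2) (span (ZMod 2) (v '' S)) := by
    intro S
    have h1 := hgrank (F '' S) (hsub S)
    rw [hF S, mRank_vecMatroid, Set.image_image g F S] at h1
    exact_mod_cast h1
  refine ⟨hrk, fun i => ?_⟩
  rcases hgedge (F i) (hFE i) with h0 | h
  · exfalso
    have h2 := hrk {i}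
    rw [Set.image_singleton, Set.image_singleton, finrank_span_singleton (hv i), h0,
      span_zero_singleton, finrank_bot] at h2
    exact absurd h2 (by norm_num)
  · exact h

/-! ### Concrete data -/

abbrev Wfour := Fin 4 → ZMod 2

def wK : Fin 6 → Wfour :=
  ![![1,1,0,0], ![0,1,1,0], ![1,0,1,0], ![1,0,0,1], ![0,1,0,1], ![0,0,1,1]]
def wK' : Fin 6 → Wfour :=
  ![![1,1,0,0], ![0,1,1,0], ![1,0,1,0], ![0,1,0,1], ![1,0,0,1], ![0,0,1,1]]

def TW : Wfour →ₗ[ZMod 2] Wfour where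
  toFun y := y + y 3 • ![1,1,0,0]
  map_add' a b := by
    funext i
    simp only [Pi.add_apply, Pi.smul_apply, smul_eq_mul]
    ring
  map_smul' c y := by
    funext i
    simp only [Pi.add_apply, Pi.smul_apply, smul_eq_mul, RingHom.id_apply]
    ring

lemma TW_apply (y : Wfour) : TW y = y + y 3 • ![1,1,0,0] := rfl

lemma TW_inj : Function.Injective TW := by
  intro a b h
  rw [TW_apply, TW_apply] at h
  have h3 : a 3 = b 3 := by
    have h4 := congrFun h 3
    simp only [Pi.add_apply, Pi.smul_apply, smul_eq_mul,
      show (![1,1,0,0] : Wfour) 3 = 0 from rfl, mul_zero, add_zero] at h4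
    exact h4
  rw [h3] at h
  exact add_right_cancel h

lemma wK_prefix_eq :
    prefixMatroid (by norm_num : (5:ℕ) ≤ 6) (vecMatroid wK)
      = prefixMatroid (by norm_num : (5:ℕ) ≤ 6) (vecMatroid wK') := by
  rw [vecMatroid_comap, vecMatroid_comap]
  have hfun : (fun i => TW ((wK ∘ Fin.castLE (by norm_num : (5:ℕ) ≤ 6)) i))
      = wK' ∘ Fin.castLE (by norm_num : (5:ℕ) ≤ 6) := by
    funext i
    show (wK (Fin.castLE _ i)) + (wK (Fin.castLE _ i)) 3 • ![1,1,0,0]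
      = wK' (Fin.castLE _ i)
    revert i
    decide
  rw [← vecMatroid_comp_linear TW TW_inj (wK ∘ Fin.castLE (by norm_num : (5:ℕ) ≤ 6)), hfun]

lemma edge_cond_of_iff {V : Type*} {y : V → ZMod 2} {u u' : V} (hne : u ≠ u')
    (h : ∀ x, y x ≠ 0 ↔ (x = u ∨ x = u')) :
    ∃ a b : V, a ≠ b ∧ {w | y w ≠ 0} = {a, b} :=
  ⟨u, u', hne, Set.ext fun x => by simpa using h x⟩

lemma isGraphic_vecMatroid {m : ℕ} (v : Fin m → Wfour)
    (hedge : ∀ e, ∃ u u' : Fin 4, u ≠ u' ∧ ∀ x, v e x ≠ 0 ↔ (x = u ∨ x = u')) :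
    IsGraphic (vecMatroid v) := by
  refine ⟨Fin 4, inferInstance, v, fun S _ => ?_, fun e _ => ?_⟩
  · rw [mRank_vecMatroid]
    rfl
  · obtain ⟨u, u', hne, hiff⟩ := hedge e
    exact Or.inr (edge_cond_of_iff hne hiff)

/-! ### The main argument -/

theorem no_ome_graphic {β : Type*} (N : Matroid β) (hN : IsGraphic N) :
    ¬ OMEof (fun m M => m ≤ 6 ∧ M.E = univ ∧ IsGraphic M) N := by
  intro hOME
  obtain ⟨V, fV, g, hgrank, hgedge⟩ := hN
  obtain ⟨f, _hinj, hrank, hpref⟩ := hOME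
  haveI : Fintype V := fV
  have hPM : (6:ℕ) ≤ 6 ∧ (vecMatroid wK).E = univ ∧ IsGraphic (vecMatroid wK) :=
    ⟨le_refl _, rfl, isGraphic_vecMatroid wK (by decide)⟩
  have hPM' : (6:ℕ) ≤ 6 ∧ (vecMatroid wK').E = univ ∧ IsGraphic (vecMatroid wK') :=
    ⟨le_refl _, rfl, isGraphic_vecMatroid wK' (by decide)⟩
  have hFM : ∀ S : Set (Fin 6),
      mRank N (f 6 (vecMatroid wK) '' S) = mRank (vecMatroid wK) S :=
    fun S => hrank 6 (vecMatroid wK) hPM S (Set.subset_univ S)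
  have hFM' : ∀ S : Set (Fin 6),
      mRank N (f 6 (vecMatroid wK') '' S) = mRank (vecMatroid wK') S :=
    fun S => hrank 6 (vecMatroid wK') hPM' S (Set.subset_univ S)
  obtain ⟨hrk, hedge⟩ := derive_facts N g hgrank hgedge wK (by decide) (f 6 (vecMatroid wK)) hFM
  obtain ⟨hrk', hedge'⟩ :=
    derive_facts N g hgrank hgedge wK' (by decide) (f 6 (vecMatroid wK')) hFM'
  set h : Fin 6 → V → ZMod 2 := fun i => g (f 6 (vecMatroid wK) i) with hdef
  set h' : Fin 6 → V → ZMod 2 := fun i => g (f 6 (vecMatroid wK') i) with hdef'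
  have hpairT : ∀ i j : Fin 6, wK i ≠ 0 → wK j ≠ 0 → wK i ≠ wK j →
      finrank (ZMod 2) (span (ZMod 2) ({h i, h j} : Set (V → ZMod 2))) = 2 := by
    intro i j h1 h2 h3
    have h4 := hrk {i, j}
    rw [Set.image_pair, Set.image_pair] at h4
    rw [hdef, h4]
    exact pair_rank_two h1 h2 h3
  have htripT : ∀ i j k : Fin 6, wK i ≠ 0 → wK j ≠ 0 → wK i ≠ wK j → wK k = wK i + wK j →
      finrank (ZMod 2) (span (ZMod 2) ({h i, h j, h k} : Set (V → ZMod 2))) = 2 := by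
    intro i j k h1 h2 h3 h4
    have h5 := hrk {i, j, k}
    rw [show (fun i => g (f 6 (vecMatroid wK) i)) '' {i,j,k} = {h i, h j, h k} by
        simp [hdef, Set.image_insert_eq],
      show wK '' {i,j,k} = {wK i, wK j, wK k} by simp [Set.image_insert_eq]] at h5
    rw [h5]
    exact triple_rank_two h1 h2 h3 h4
  have hpairT' : ∀ i j : Fin 6, wK' i ≠ 0 → wK' j ≠ 0 → wK' i ≠ wK' j →
      finrank (ZMod 2) (span (ZMod 2) ({h' i, h' j} : Set (V → ZMod 2))) = 2 := by
    intro i j h1 h2 h3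
    have h4 := hrk' {i, j}
    rw [Set.image_pair, Set.image_pair] at h4
    rw [hdef', h4]
    exact pair_rank_two h1 h2 h3
  have htripT' : ∀ i j k : Fin 6, wK' i ≠ 0 → wK' j ≠ 0 → wK' i ≠ wK' j →
      wK' k = wK' i + wK' j →
      finrank (ZMod 2) (span (ZMod 2) ({h' i, h' j, h' k} : Set (V → ZMod 2))) = 2 := by
    intro i j k h1 h2 h3 h4
    have h5 := hrk' {i, j, k}
    rw [show (fun i => g (f 6 (vecMatroid wK') i)) '' {i,j,k} = {h' i, h' j, h' k} by
        simp [hdef', Set.image_insert_eq],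
      show wK' '' {i,j,k} = {wK' i, wK' j, wK' k} by simp [Set.image_insert_eq]] at h5
    rw [h5]
    exact triple_rank_two h1 h2 h3 h4
  have heq2 : h 2 = h 0 + h 1 :=
    triangle_eq (hpairT 0 1 (by decide) (by decide) (by decide))
      (hpairT 0 2 (by decide) (by decide) (by decide))
      (hpairT 1 2 (by decide) (by decide) (by decide))
      (htripT 0 1 2 (by decide) (by decide) (by decide) (by decide))
  have heq4 : h 4 = h 0 + h 3 :=
    triangle_eq (hpairT 0 3 (by decide) (by decide) (by decide))
      (hpairT 0 4 (by decide) (by decide) (by decide))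
      (hpairT 3 4 (by decide) (by decide) (by decide))
      (htripT 0 3 4 (by decide) (by decide) (by decide) (by decide))
  have heq5 : h 5 = h 2 + h 3 :=
    triangle_eq (hpairT 2 3 (by decide) (by decide) (by decide))
      (hpairT 2 5 (by decide) (by decide) (by decide))
      (hpairT 3 5 (by decide) (by decide) (by decide))
      (htripT 2 3 5 (by decide) (by decide) (by decide) (by decide))
  have heq5' : h' 5 = h' 1 + h' 3 :=
    triangle_eq (hpairT' 1 3 (by decide) (by decide) (by decide))
      (hpairT' 1 5 (by decide) (by decide) (by decide))
      (hpairT' 3 5 (by decide) (by decide) (by decide))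
      (htripT' 1 3 5 (by decide) (by decide) (by decide) (by decide))
  have h56 : (5:ℕ) ≤ 6 := by norm_num
  have hagree : ∀ i : Fin 5,
      f 6 (vecMatroid wK) (Fin.castLE h56 i) = f 6 (vecMatroid wK') (Fin.castLE h56 i) := by
    intro i
    rw [← hpref 5 6 h56 (vecMatroid wK) hPM i, ← hpref 5 6 h56 (vecMatroid wK') hPM' i,
      wK_prefix_eq]
  have e1 : h 1 = h' 1 := by
    rw [hdef, hdef', show (1 : Fin 6) = Fin.castLE h56 (1 : Fin 5) from rfl]
    exact congrArg g (hagree 1)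
  have e3 : h 3 = h' 3 := by
    rw [hdef, hdef', show (3 : Fin 6) = Fin.castLE h56 (3 : Fin 5) from rfl]
    exact congrArg g (hagree 3)
  have E01 : EdgeVec (h 0 + h 1) := by rw [← heq2]; exact hedge 2
  have E30 : EdgeVec (h 3 + h 0) := by rw [add_comm (h 3) (h 0), ← heq4]; exact hedge 4
  have E31 : EdgeVec (h 3 + h 1) := by
    rw [e3, e1, add_comm (h' 3) (h' 1), ← heq5']
    exact hedge' 5
  have E301 : EdgeVec (h 3 + (h 0 + h 1)) := by
    rw [← heq2, add_comm (h 3) (h 2), ← heq5]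
    exact hedge 5
  exact no_k4_edges (hedge 0) (hedge 1) E01 (hedge 3) E30 E31 E301

/-- There is no graphic matroid `N` (on any type) admitting an online matroid embedding of
the class of all graphic matroids; in fact this already fails for the class of graphic
matroids with at most `6` elements. -/
theorem stmt7 :
    (∀ (β : Type*) (N : Matroid β), IsGraphic N →
      ¬ OMEof (fun _ M => M.E = univ ∧ IsGraphic M) N) ∧
    (∀ (β : Type*) (N : Matroid β), IsGraphic N →
      ¬ OMEof (fun m M => m ≤ 6 ∧ M.E = univ ∧ IsGraphic M) N) := by
  constructor
  · intro β N hN hO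
    apply no_ome_graphic N hN
    obtain ⟨f, h1, h2, h3⟩ := hO
    exact ⟨f, fun m M hP => h1 m M hP.2, fun m M hP => h2 m M hP.2,
      fun k m hkm M hP => h3 k m hkm M hP.2⟩
  · intro β N hN
    exact no_ome_graphic N hN
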